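/- For every nondeterministic pushdown automaton Γ accepting by final state there exists a pushdown automaton Γ' accepting by empty stack with L(Γ) = L(Γ') and push_{Γ'}(n) ∈ O(push_Γ(n)), and conversely; hence PUSH_λ(f(n)) = PUSH_f(f(n)) for every function f. -/

import Mathlib

/-- A context-free rule is *regular* (right-linear) if it has the form `A → w` or `A → wB`
for a terminal word `w` and a nonterminal `B`. -/
def IsRegularRule {T N : Type} (r : ContextFreeRule T N) : Prop :=
  (∃ w : List T, r.output = w.map Symbol.terminal) ∨
  (∃ w : List T, ∃ B : N, r.output = w.map Symbol.terminal ++ [Symbol.nonterminal B])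

/-- `DerivesN g u v k` : the grammar `g` derives `v` from `u` by a derivation using exactly `k`
applications of non-regular rules. -/
inductive DerivesN (g : ContextFreeGrammar T) :
    List (Symbol T g.NT) → List (Symbol T g.NT) → ℕ → Prop
  | refl (u : List (Symbol T g.NT)) : DerivesN g u u 0
  | regStep {u v w : List (Symbol T g.NT)} {k : ℕ} (r : ContextFreeRule T g.NT)
      (hr : r ∈ g.rules) (hreg : IsRegularRule r) (huv : r.Rewrites u v)
      (hvw : DerivesN g v w k) : DerivesN g u w k
  | nonregStep {u v w : List (Symbol T g.NT)} {k : ℕ} (r : ContextFreeRule T g.NT)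
      (hr : r ∈ g.rules) (hreg : ¬ IsRegularRule r) (huv : r.Rewrites u v)
      (hvw : DerivesN g v w k) : DerivesN g u w (k + 1)

/-- The degree of non-regularity of a terminal word: the minimal number of applications of
non-regular rules over all derivations of the word (`0` if there is no derivation, since in `ℕ`
the infimum of the empty set is `0`). -/
noncomputable def dnregWord (g : ContextFreeGrammar T) (w : List T) : ℕ :=
  sInf {k | DerivesN g [Symbol.nonterminal g.initial] (w.map Symbol.terminal) k}

/-- The degree of non-regularity of the grammar: the maximum of `dnregWord` over words of
length `n`. -/
noncomputable def dnregFun (g : ContextFreeGrammar T) (n : ℕ) : ℕ :=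
  sSup {m | ∃ w : List T, w.length = n ∧ dnregWord g w = m}

/-- `f ∈ O(h)` for `ℕ`-valued functions. -/
def InO (f h : ℕ → ℕ) : Prop := ∃ c : ℕ, ∀ n, f n ≤ c * h n + c

/-- `f ∈ Ω(n)`: there is a rational constant `1/c > 0` with `f n ≥ n/c` for infinitely many `n`. -/
def InOmegaLinear (f : ℕ → ℕ) : Prop := ∃ c : ℕ, 0 < c ∧ ∀ m : ℕ, ∃ n ≥ m, n ≤ c * f n

/-- The class `DNREG(h)` of languages generated by some context-free grammar whose degree of
non-regularity is in `O(h)`. -/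
def DNREG (T : Type) (h : ℕ → ℕ) : Set (Language T) :=
  {L | ∃ g : ContextFreeGrammar T, g.language = L ∧ InO (dnregFun g) h}
/-- A (nondeterministic) pushdown automaton with input alphabet `T`. -/
structure PDA (T : Type) where
  /-- States. -/
  Q : Type
  /-- Stack alphabet. -/
  Γ : Type
  [fQ : Fintype Q]
  [fΓ : Fintype Γ]
  /-- Transition function: in a state, reading an optional input letter and the top stack
  symbol, nondeterministically move to a new state, replacing the top symbol by a word. -/
  δ : Q → Option T → Γ → Set (Q × List Γ)
  fin : ∀ q a Z, (δ q a Z).Finite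
  /-- Initial state. -/
  q₀ : Q
  /-- Initial stack symbol. -/
  Z₀ : Γ
  /-- Final states. -/
  F : Set Q

/-- `P.Steps c c' k` : the PDA `P` goes from configuration `c` (state, remaining input, stack)
to configuration `c'` using exactly `k` push moves (moves replacing the top symbol by a word of
length at least `2`). -/
inductive PDA.Steps (P : PDA T) :
    P.Q × List T × List P.Γ → P.Q × List T × List P.Γ → ℕ → Prop
  | refl (c : P.Q × List T × List P.Γ) : Steps P c c 0
  | step {p : P.Q} {w : List T} {γ α : List P.Γ} {c : P.Q × List T × List P.Γ} {Z : P.Γ}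
      {q : P.Q} {k : ℕ} {a : Option T} (h : (p, α) ∈ P.δ q a Z)
      (ih : Steps P (p, w, α ++ γ) c k) :
      Steps P (q, a.toList ++ w, Z :: γ) c (if 2 ≤ α.length then k + 1 else k)

/-- Acceptance by empty stack (reading the whole input), with `k` push moves. -/
def PDA.AcceptsEmptyN (P : PDA T) (w : List T) (k : ℕ) : Prop :=
  ∃ q : P.Q, P.Steps (P.q₀, w, [P.Z₀]) (q, [], []) k

/-- Acceptance by final state (reading the whole input), with `k` push moves. -/
def PDA.AcceptsFinalN (P : PDA T) (w : List T) (k : ℕ) : Prop :=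
  ∃ q ∈ P.F, ∃ γ : List P.Γ, P.Steps (P.q₀, w, [P.Z₀]) (q, [], γ) k

/-- The language accepted with empty stack. -/
def PDA.langEmpty (P : PDA T) : Language T := {w | ∃ k, P.AcceptsEmptyN w k}

/-- The language accepted with final states. -/
def PDA.langFinal (P : PDA T) : Language T := {w | ∃ k, P.AcceptsFinalN w k}

/-- Push complexity of a word (empty-stack mode): the minimal number of push moves over all
accepting computations (`0` if the word is not accepted). -/
noncomputable def PDA.pushEmptyW (P : PDA T) (w : List T) : ℕ :=
  sInf {k | P.AcceptsEmptyN w k}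

/-- Push complexity of a word (final-state mode). -/
noncomputable def PDA.pushFinalW (P : PDA T) (w : List T) : ℕ :=
  sInf {k | P.AcceptsFinalN w k}

/-- Push complexity function (empty-stack mode): maximum over words of length `n`. -/
noncomputable def PDA.pushEmptyFun (P : PDA T) (n : ℕ) : ℕ :=
  sSup {m | ∃ w : List T, w.length = n ∧ P.pushEmptyW w = m}

/-- Push complexity function (final-state mode). -/
noncomputable def PDA.pushFinalFun (P : PDA T) (n : ℕ) : ℕ :=
  sSup {m | ∃ w : List T, w.length = n ∧ P.pushFinalW w = m}

/-- The class `PUSH_λ(f)` of languages accepted with empty stack by some PDA with push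
complexity in `O(f)`. -/
def PUSHempty (T : Type) (f : ℕ → ℕ) : Set (Language T) :=
  {L | ∃ P : PDA T, P.langEmpty = L ∧ InO (P.pushEmptyFun) f}

/-- The class `PUSH_f(f)` of languages accepted with final states by some PDA with push
complexity in `O(f)`. -/
def PUSHfinal (T : Type) (f : ℕ → ℕ) : Set (Language T) :=
  {L | ∃ P : PDA T, P.langFinal = L ∧ InO (P.pushFinalFun) f}

namespace PDAaux
variable {T : Type}

theorem steps_trans {P : PDA T} {c₁ c₂ : P.Q × List T × List P.Γ} {k₁ : ℕ}
    (h₁ : P.Steps c₁ c₂ k₁) :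
    ∀ {c₃ : P.Q × List T × List P.Γ} {k₂ : ℕ}, P.Steps c₂ c₃ k₂ → P.Steps c₁ c₃ (k₁ + k₂) := by
  induction h₁ with
  | refl c => intro c₃ k₂ h₂; simpa using h₂
  | @step p w γ α c2 Z q k a h ih IH =>
      intro c₃ k₂ h₂
      have h3 := PDA.Steps.step h (IH h₂)
      convert h3 using 1
      split_ifs <;> omega

/-- Conversion: final-state PDA to empty-stack PDA. -/
@[reducible] def toEmpty (P : PDA T) : PDA T where
  Q := Option (Option P.Q)
  Γ := Option P.Γ
  fQ := @instFintypeOption _ (@instFintypeOption _ P.fQ)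
  fΓ := @instFintypeOption _ P.fΓ
  δ := fun q a Z =>
    match q, Z with
    | some none, none => {x | a = none ∧ x = (some (some P.q₀), [some P.Z₀, none])}
    | some none, some _ => ∅
    | some (some p), some Z =>
        (fun r : P.Q × List P.Γ => ((some (some r.1) : Option (Option P.Q)), r.2.map some)) ''
          P.δ p a Z ∪ {x | a = none ∧ p ∈ P.F ∧ x = (none, [])}
    | some (some p), none => {x | a = none ∧ p ∈ P.F ∧ x = (none, [])}
    | none, _ => {x | a = none ∧ x = (none, [])}
  fin := by
    intro q a Z
    rcases q with _ | (_ | p)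
    · exact (Set.finite_singleton ((none : Option (Option P.Q)), ([] : List (Option P.Γ)))).subset
        (fun x hx => hx.2)
    · rcases Z with _ | Z
      · exact (Set.finite_singleton _).subset (fun x hx => hx.2)
      · exact Set.finite_empty
    · rcases Z with _ | Z
      · exact (Set.finite_singleton _).subset (fun x hx => hx.2.2)
      · exact ((P.fin p a Z).image _).union ((Set.finite_singleton _).subset (fun x hx => hx.2.2))
  q₀ := some none
  Z₀ := none
  F := ∅

theorem fwd_toEmpty {P : PDA T} {c c' : P.Q × List T × List P.Γ} {k : ℕ}
    (h : P.Steps c c' k) :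
    (toEmpty P).Steps (some (some c.1), c.2.1, c.2.2.map some ++ [none])
      (some (some c'.1), c'.2.1, c'.2.2.map some ++ [none]) k := by
  induction h with
  | refl c => exact .refl _
  | @step p w γ α c2 Z q k a h ih IH =>
      have hmem : ((some (some p) : Option (Option P.Q)), α.map some) ∈
          (toEmpty P).δ (some (some q)) a (some Z) := Or.inl ⟨(p, α), h, rfl⟩
      have h2 := PDA.Steps.step (P := toEmpty P) (γ := γ.map some ++ [none]) hmem
        (by simpa [List.map_append, List.append_assoc] using IH)
      simpa using h2

theorem dumpAll {P : PDA T} : ∀ l : List (Option P.Γ),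
    (toEmpty P).Steps (none, [], l) (none, [], []) 0
  | [] => .refl _
  | Z :: l => by
      have h : ((none : Option (Option P.Q)), ([] : List (Option P.Γ))) ∈
          (toEmpty P).δ none none Z := ⟨rfl, rfl⟩
      have := PDA.Steps.step (P := toEmpty P) (w := []) (γ := l) h (dumpAll l)
      simpa using this

theorem dump_inv {P : PDA T} {c c' : (toEmpty P).Q × List T × List (toEmpty P).Γ} {k : ℕ}
    (h : (toEmpty P).Steps c c' k) :
    ∀ w l r, c = (none, w, l) → c' = (r, [], []) → w = [] ∧ k = 0 := by
  induction h with
  | refl c =>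
      rintro w l r rfl h2
      simp only [Prod.mk.injEq] at h2
      exact ⟨h2.2.1, rfl⟩
  | @step p w1 γ1 α c2 Z q1 k a h ih IH =>
      rintro w l r h1 rfl
      simp only [Prod.mk.injEq] at h1
      obtain ⟨hq, hw, hl⟩ := h1
      subst hq
      obtain ⟨ha, hx⟩ := h
      simp only [Prod.mk.injEq] at hx
      obtain ⟨rfl, rfl⟩ := hx
      obtain ⟨hw1, hk⟩ := IH w1 γ1 r rfl rfl
      subst ha hw1
      simp_all
theorem inv_toEmpty {P : PDA T} {c c' : (toEmpty P).Q × List T × List (toEmpty P).Γ} {k : ℕ}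
    (h : (toEmpty P).Steps c c' k) :
    ∀ (q : P.Q) (w : List T) (γ : List P.Γ) (r : (toEmpty P).Q),
      c = (some (some q), w, γ.map some ++ [none]) → c' = (r, [], []) →
      ∃ f ∈ P.F, ∃ γ'', P.Steps (q, w, γ) (f, [], γ'') k := by
  induction h with
  | refl c =>
      rintro q w γ r rfl h2
      exfalso
      simp only [Prod.mk.injEq] at h2
      exact absurd h2.2.2 (by simp)
  | @step p w1 γ1 α c2 Z q1 k a h ih IH =>
      rintro q' w' γ r h1 rfl
      simp only [Prod.mk.injEq] at h1
      obtain ⟨hq, hw, hst⟩ := h1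
      subst hq hw
      cases γ with
      | nil =>
          simp only [List.map_nil, List.nil_append, List.cons.injEq] at hst
          obtain ⟨rfl, rfl⟩ := hst
          obtain ⟨rfl, hF, hx⟩ := h
          simp only [Prod.mk.injEq] at hx
          obtain ⟨rfl, rfl⟩ := hx
          obtain ⟨hw1, hk⟩ := dump_inv ih w1 ([] ++ []) r rfl rfl
          subst hw1 hk
          exact ⟨q', hF, [], by simpa using PDA.Steps.refl _⟩
      | cons X γt =>
          simp only [List.map_cons, List.cons_append, List.cons.injEq] at hst
          obtain ⟨rfl, rfl⟩ := hst
          rcases h with ⟨⟨p0, α0⟩, hP, heq⟩ | ⟨rfl, hF, hx⟩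
          · simp only [Prod.mk.injEq] at heq
            obtain ⟨rfl, rfl⟩ := heq
            obtain ⟨f, hf, γ'', hsteps⟩ := IH p0 w1 (α0 ++ γt) r
              (by simp [List.map_append, List.append_assoc]) rfl
            refine ⟨f, hf, γ'', ?_⟩
            have := PDA.Steps.step hP hsteps
            simpa using this
          · simp only [Prod.mk.injEq] at hx
            obtain ⟨rfl, rfl⟩ := hx
            obtain ⟨hw1, hk⟩ := dump_inv ih w1 _ r rfl rfl
            subst hw1 hk
            exact ⟨q', hF, X :: γt, by simpa using PDA.Steps.refl _⟩
theorem first_inv {P : PDA T} {c c' : (toEmpty P).Q × List T × List (toEmpty P).Γ} {k : ℕ}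
    (h : (toEmpty P).Steps c c' k) :
    ∀ w r, c = (some none, w, [none]) → c' = (r, [], []) →
      ∃ k', k = k' + 1 ∧
        (toEmpty P).Steps (some (some P.q₀), w, [some P.Z₀, none]) c' k' := by
  induction h with
  | refl c =>
      rintro w r rfl h2
      exfalso
      simp only [Prod.mk.injEq] at h2
      exact absurd h2.2.2 (by simp)
  | @step p w1 γ1 α c2 Z q1 k a h ih IH =>
      rintro w r h1 rfl
      simp only [Prod.mk.injEq, List.cons.injEq] at h1
      obtain ⟨hq, hw, rfl, rfl⟩ := h1
      subst hq
      obtain ⟨rfl, hx⟩ := h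
      simp only [Prod.mk.injEq] at hx
      obtain ⟨rfl, rfl⟩ := hx
      subst hw
      exact ⟨k, by norm_num, by simpa using ih⟩

theorem exitF {P : PDA T} {f : P.Q} (hf : f ∈ P.F) (γ : List P.Γ) :
    (toEmpty P).Steps (some (some f), [], γ.map some ++ [none]) (none, [], []) 0 := by
  cases γ with
  | nil =>
      have h : ((none : Option (Option P.Q)), ([] : List (Option P.Γ))) ∈
          (toEmpty P).δ (some (some f)) none none := ⟨rfl, hf, rfl⟩
      have := PDA.Steps.step (P := toEmpty P) (w := []) (γ := []) h (dumpAll [])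
      simpa using this
  | cons X γt =>
      have h : ((none : Option (Option P.Q)), ([] : List (Option P.Γ))) ∈
          (toEmpty P).δ (some (some f)) none (some X) := Or.inr ⟨rfl, hf, rfl⟩
      have := PDA.Steps.step (P := toEmpty P) (w := []) (γ := γt.map some ++ [none]) h
        (dumpAll (γt.map some ++ [none]))
      simpa using this

theorem acceptsE_iff {P : PDA T} (w : List T) (m : ℕ) :
    (toEmpty P).AcceptsEmptyN w m ↔ ∃ k, P.AcceptsFinalN w k ∧ m = k + 1 := by
  constructor
  · rintro ⟨r, hsteps⟩
    obtain ⟨k', rfl, hrest⟩ := first_inv hsteps w r rfl rfl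
    obtain ⟨f, hf, γ'', hP⟩ := inv_toEmpty hrest P.q₀ w [P.Z₀] r (by simp) rfl
    exact ⟨k', ⟨f, hf, γ'', hP⟩, rfl⟩
  · rintro ⟨k, ⟨f, hf, γ, hP⟩, rfl⟩
    refine ⟨none, ?_⟩
    have hsim := fwd_toEmpty hP
    have h2 := steps_trans hsim (exitF hf γ)
    have hinit : ((some (some P.q₀) : Option (Option P.Q)), [some P.Z₀, none]) ∈
        (toEmpty P).δ (some none) none none := ⟨rfl, rfl⟩
    have h3 := PDA.Steps.step (P := toEmpty P) (w := w) (γ := []) hinit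
      (by simpa using h2)
    simpa [Nat.add_comm] using h3
theorem natSSup_le {S : Set ℕ} {M : ℕ} (h : ∀ a ∈ S, a ≤ M) : sSup S ≤ M := by
  rcases S.eq_empty_or_nonempty with rfl | hS
  · simp [csSup_empty]
  · exact csSup_le hS h

theorem sup_le_sup_add {S' S : Set ℕ} (h1 : ∀ a ∈ S', ∃ b ∈ S, a ≤ b + 1)
    (h2 : ∀ b ∈ S, ∃ a ∈ S', b ≤ a) : sSup S' ≤ sSup S + 1 := by
  by_cases hb : BddAbove S
  · refine natSSup_le fun a ha => ?_
    obtain ⟨b, hbS, hab⟩ := h1 a ha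
    exact hab.trans (Nat.add_le_add_right (le_csSup hb hbS) 1)
  · have hb' : ¬ BddAbove S' := by
      rintro ⟨M, hM⟩
      exact hb ⟨M, fun b hbS => by
        obtain ⟨a, haS', hba⟩ := h2 b hbS
        exact hba.trans (hM haS')⟩
    rw [csSup_of_not_bddAbove hb', csSup_empty]
    exact Nat.zero_le _

theorem pushW_toEmpty (P : PDA T) (w : List T) :
    (toEmpty P).pushEmptyW w ≤ P.pushFinalW w + 1 ∧
      P.pushFinalW w ≤ (toEmpty P).pushEmptyW w := by
  have hset : {m | (toEmpty P).AcceptsEmptyN w m} = (· + 1) '' {k | P.AcceptsFinalN w k} := by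
    ext m
    simp only [Set.mem_setOf_eq, Set.mem_image, acceptsE_iff]
    constructor
    · rintro ⟨k, hk, rfl⟩; exact ⟨k, hk, rfl⟩
    · rintro ⟨k, hk, rfl⟩; exact ⟨k, hk, rfl⟩
  unfold PDA.pushEmptyW PDA.pushFinalW
  rw [hset]
  rcases Set.eq_empty_or_nonempty {k | P.AcceptsFinalN w k} with he | hne
  · rw [he]; simp
  · constructor
    · exact Nat.sInf_le ⟨sInf _, Nat.sInf_mem hne, rfl⟩
    · obtain ⟨b, hb, heq⟩ := Nat.sInf_mem (hne.image (· + 1))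
      calc sInf {k | P.AcceptsFinalN w k} ≤ b := Nat.sInf_le hb
        _ ≤ b + 1 := Nat.le_succ b
        _ = _ := heq

theorem lang_toEmpty (P : PDA T) : (toEmpty P).langEmpty = P.langFinal := by
  ext w
  simp only [PDA.langEmpty, PDA.langFinal, Set.mem_setOf_eq]
  constructor
  · rintro ⟨m, hm⟩
    obtain ⟨k, hk, rfl⟩ := (acceptsE_iff w m).1 hm
    exact ⟨k, hk⟩
  · rintro ⟨k, hk⟩
    exact ⟨k + 1, (acceptsE_iff w (k + 1)).2 ⟨k, hk, rfl⟩⟩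

theorem main_toEmpty (P : PDA T) : (toEmpty P).langEmpty = P.langFinal ∧
    InO (toEmpty P).pushEmptyFun P.pushFinalFun := by
  refine ⟨lang_toEmpty P, 1, fun n => ?_⟩
  rw [one_mul]
  unfold PDA.pushEmptyFun PDA.pushFinalFun
  apply sup_le_sup_add
  · rintro a ⟨w, hlen, rfl⟩
    exact ⟨P.pushFinalW w, ⟨w, hlen, rfl⟩, (pushW_toEmpty P w).1⟩
  · rintro b ⟨w, hlen, rfl⟩
    exact ⟨(toEmpty P).pushEmptyW w, ⟨w, hlen, rfl⟩, (pushW_toEmpty P w).2⟩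
/-- Conversion: empty-stack PDA to final-state PDA. -/
@[reducible] def toFinal (P : PDA T) : PDA T where
  Q := Option (Option P.Q)
  Γ := Option P.Γ
  fQ := @instFintypeOption _ (@instFintypeOption _ P.fQ)
  fΓ := @instFintypeOption _ P.fΓ
  δ := fun q a Z =>
    match q, Z with
    | some none, none => {x | a = none ∧ x = (some (some P.q₀), [some P.Z₀, none])}
    | some none, some _ => ∅
    | some (some p), some Z =>
        (fun r : P.Q × List P.Γ => ((some (some r.1) : Option (Option P.Q)), r.2.map some)) ''
          P.δ p a Z
    | some (some _), none => {x | a = none ∧ x = (none, [])}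
    | none, _ => ∅
  fin := by
    intro q a Z
    rcases q with _ | (_ | p)
    · exact Set.finite_empty
    · rcases Z with _ | Z
      · exact (Set.finite_singleton _).subset (fun x hx => hx.2)
      · exact Set.finite_empty
    · rcases Z with _ | Z
      · exact (Set.finite_singleton _).subset (fun x hx => hx.2)
      · exact (P.fin p a Z).image _
  q₀ := some none
  Z₀ := none
  F := {none}

theorem fwd_toFinal {P : PDA T} {c c' : P.Q × List T × List P.Γ} {k : ℕ}
    (h : P.Steps c c' k) :
    (toFinal P).Steps (some (some c.1), c.2.1, c.2.2.map some ++ [none])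
      (some (some c'.1), c'.2.1, c'.2.2.map some ++ [none]) k := by
  induction h with
  | refl c => exact .refl _
  | @step p w γ α c2 Z q k a h ih IH =>
      have hmem : ((some (some p) : Option (Option P.Q)), α.map some) ∈
          (toFinal P).δ (some (some q)) a (some Z) := ⟨(p, α), h, rfl⟩
      have h2 := PDA.Steps.step (P := toFinal P) (γ := γ.map some ++ [none]) hmem
        (by simpa [List.map_append, List.append_assoc] using IH)
      simpa using h2

theorem fin_inv {P : PDA T} {c c' : (toFinal P).Q × List T × List (toFinal P).Γ} {k : ℕ}
    (h : (toFinal P).Steps c c' k) :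
    ∀ w l r γ'', c = (none, w, l) → c' = (r, [], γ'') → w = [] ∧ k = 0 := by
  induction h with
  | refl c =>
      rintro w l r γ'' rfl h2
      simp only [Prod.mk.injEq] at h2
      exact ⟨h2.2.1, rfl⟩
  | @step p w1 γ1 α c2 Z q1 k a h ih IH =>
      rintro w l r γ'' h1 rfl
      simp only [Prod.mk.injEq] at h1
      obtain ⟨hq, hw, hl⟩ := h1
      subst hq
      exact absurd h (by rcases Z with _ | Z <;> simp [toFinal])

theorem inv_toFinal {P : PDA T} {c c' : (toFinal P).Q × List T × List (toFinal P).Γ} {k : ℕ}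
    (h : (toFinal P).Steps c c' k) :
    ∀ (q : P.Q) (w : List T) (γ : List P.Γ) (γ'' : List (toFinal P).Γ),
      c = (some (some q), w, γ.map some ++ [none]) → c' = (none, [], γ'') →
      ∃ q' : P.Q, P.Steps (q, w, γ) (q', [], []) k := by
  induction h with
  | refl c =>
      rintro q w γ γ'' rfl h2
      exfalso
      simp only [Prod.mk.injEq] at h2
      exact Option.some_ne_none _ h2.1
  | @step p w1 γ1 α c2 Z q1 k a h ih IH =>
      rintro q' w' γ γ'' h1 rfl
      simp only [Prod.mk.injEq] at h1
      obtain ⟨hq, hw, hst⟩ := h1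
      subst hq hw
      cases γ with
      | nil =>
          simp only [List.map_nil, List.nil_append, List.cons.injEq] at hst
          obtain ⟨rfl, rfl⟩ := hst
          obtain ⟨rfl, hx⟩ := h
          simp only [Prod.mk.injEq] at hx
          obtain ⟨rfl, rfl⟩ := hx
          obtain ⟨hw1, hk⟩ := fin_inv ih w1 ([] ++ []) none γ'' rfl rfl
          subst hw1 hk
          exact ⟨q', by simpa using PDA.Steps.refl _⟩
      | cons X γt =>
          simp only [List.map_cons, List.cons_append, List.cons.injEq] at hst
          obtain ⟨rfl, rfl⟩ := hst
          obtain ⟨⟨p0, α0⟩, hP, heq⟩ := h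
          simp only [Prod.mk.injEq] at heq
          obtain ⟨rfl, rfl⟩ := heq
          obtain ⟨q'', hsteps⟩ := IH p0 w1 (α0 ++ γt) γ''
            (by simp [List.map_append, List.append_assoc]) rfl
          refine ⟨q'', ?_⟩
          have := PDA.Steps.step hP hsteps
          simpa using this

theorem first_inv_toFinal {P : PDA T} {c c' : (toFinal P).Q × List T × List (toFinal P).Γ}
    {k : ℕ} (h : (toFinal P).Steps c c' k) :
    ∀ w γ'', c = (some none, w, [none]) → c' = (none, [], γ'') →
      ∃ k', k = k' + 1 ∧
        (toFinal P).Steps (some (some P.q₀), w, [some P.Z₀, none]) c' k' := by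
  induction h with
  | refl c =>
      rintro w γ'' rfl h2
      exfalso
      simp only [Prod.mk.injEq] at h2
      exact Option.some_ne_none _ h2.1
  | @step p w1 γ1 α c2 Z q1 k a h ih IH =>
      rintro w γ'' h1 rfl
      simp only [Prod.mk.injEq, List.cons.injEq] at h1
      obtain ⟨hq, hw, rfl, rfl⟩ := h1
      subst hq
      obtain ⟨rfl, hx⟩ := h
      simp only [Prod.mk.injEq] at hx
      obtain ⟨rfl, rfl⟩ := hx
      subst hw
      exact ⟨k, by norm_num, by simpa using ih⟩

theorem acceptsF_iff {P : PDA T} (w : List T) (m : ℕ) :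
    (toFinal P).AcceptsFinalN w m ↔ ∃ k, P.AcceptsEmptyN w k ∧ m = k + 1 := by
  constructor
  · rintro ⟨r, hr, γ'', hsteps⟩
    have hr' : r = none := hr
    subst hr'
    obtain ⟨k', rfl, hrest⟩ := first_inv_toFinal hsteps w γ'' rfl rfl
    obtain ⟨q', hP⟩ := inv_toFinal hrest P.q₀ w [P.Z₀] γ'' (by simp) rfl
    exact ⟨k', ⟨q', hP⟩, rfl⟩
  · rintro ⟨k, ⟨q, hP⟩, rfl⟩
    refine ⟨none, rfl, [], ?_⟩
    have hsim := fwd_toFinal hP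
    have hex : ((none : Option (Option P.Q)), ([] : List (Option P.Γ))) ∈
        (toFinal P).δ (some (some q)) none none := ⟨rfl, rfl⟩
    have hexit := PDA.Steps.step (P := toFinal P) (w := []) (γ := []) hex (PDA.Steps.refl _)
    have h2 := steps_trans hsim (by simpa using hexit)
    have hinit : ((some (some P.q₀) : Option (Option P.Q)), [some P.Z₀, none]) ∈
        (toFinal P).δ (some none) none none := ⟨rfl, rfl⟩
    have h3 := PDA.Steps.step (P := toFinal P) (w := w) (γ := []) hinit
      (by simpa using h2)
    simpa [Nat.add_comm] using h3

theorem pushW_toFinal (P : PDA T) (w : List T) :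
    (toFinal P).pushFinalW w ≤ P.pushEmptyW w + 1 ∧
      P.pushEmptyW w ≤ (toFinal P).pushFinalW w := by
  have hset : {m | (toFinal P).AcceptsFinalN w m} = (· + 1) '' {k | P.AcceptsEmptyN w k} := by
    ext m
    simp only [Set.mem_setOf_eq, Set.mem_image, acceptsF_iff]
    constructor
    · rintro ⟨k, hk, rfl⟩; exact ⟨k, hk, rfl⟩
    · rintro ⟨k, hk, rfl⟩; exact ⟨k, hk, rfl⟩
  unfold PDA.pushEmptyW PDA.pushFinalW
  rw [hset]
  rcases Set.eq_empty_or_nonempty {k | P.AcceptsEmptyN w k} with he | hne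
  · rw [he]; simp
  · constructor
    · exact Nat.sInf_le ⟨sInf _, Nat.sInf_mem hne, rfl⟩
    · obtain ⟨b, hb, heq⟩ := Nat.sInf_mem (hne.image (· + 1))
      calc sInf {k | P.AcceptsEmptyN w k} ≤ b := Nat.sInf_le hb
        _ ≤ b + 1 := Nat.le_succ b
        _ = _ := heq

theorem lang_toFinal (P : PDA T) : (toFinal P).langFinal = P.langEmpty := by
  ext w
  simp only [PDA.langEmpty, PDA.langFinal, Set.mem_setOf_eq]
  constructor
  · rintro ⟨m, hm⟩
    obtain ⟨k, hk, rfl⟩ := (acceptsF_iff w m).1 hm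
    exact ⟨k, hk⟩
  · rintro ⟨k, hk⟩
    exact ⟨k + 1, (acceptsF_iff w (k + 1)).2 ⟨k, hk, rfl⟩⟩

theorem main_toFinal (P : PDA T) : (toFinal P).langFinal = P.langEmpty ∧
    InO (toFinal P).pushFinalFun P.pushEmptyFun := by
  refine ⟨lang_toFinal P, 1, fun n => ?_⟩
  rw [one_mul]
  unfold PDA.pushEmptyFun PDA.pushFinalFun
  apply sup_le_sup_add
  · rintro a ⟨w, hlen, rfl⟩
    exact ⟨P.pushEmptyW w, ⟨w, hlen, rfl⟩, (pushW_toFinal P w).1⟩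
  · rintro b ⟨w, hlen, rfl⟩
    exact ⟨(toFinal P).pushFinalW w, ⟨w, hlen, rfl⟩, (pushW_toFinal P w).2⟩

theorem InO_trans {a b f : ℕ → ℕ} (h1 : InO a b) (h2 : InO b f) : InO a f := by
  obtain ⟨c, hc⟩ := h1
  obtain ⟨d, hd⟩ := h2
  refine ⟨c * d + c, fun n => ?_⟩
  have h3 := hc n
  have h4 := hd n
  nlinarith [Nat.mul_le_mul_left c h4]

end PDAaux

/-- Final-state acceptance and empty-stack acceptance are interconvertible preserving the order
of magnitude of the push complexity; hence `PUSH_λ(f) = PUSH_f(f)` for every `f`. -/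
theorem push_empty_eq_push_final (T : Type) :
    (∀ P : PDA T, ∃ P' : PDA T, P'.langEmpty = P.langFinal ∧
        InO (P'.pushEmptyFun) (P.pushFinalFun)) ∧
    (∀ P : PDA T, ∃ P' : PDA T, P'.langFinal = P.langEmpty ∧
        InO (P'.pushFinalFun) (P.pushEmptyFun)) ∧
    (∀ f : ℕ → ℕ, PUSHempty T f = PUSHfinal T f) := by
  refine ⟨fun P => ⟨PDAaux.toEmpty P, PDAaux.main_toEmpty P⟩,
          fun P => ⟨PDAaux.toFinal P, PDAaux.main_toFinal P⟩, fun f => ?_⟩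
  ext L
  constructor
  · rintro ⟨P, rfl, hO⟩
    exact ⟨PDAaux.toFinal P, (PDAaux.main_toFinal P).1,
      PDAaux.InO_trans (PDAaux.main_toFinal P).2 hO⟩
  · rintro ⟨P, rfl, hO⟩
    exact ⟨PDAaux.toEmpty P, (PDAaux.main_toEmpty P).1,
      PDAaux.InO_trans (PDAaux.main_toEmpty P).2 hO⟩
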